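/- Let C be a category with binary coproducts, X an object of C, and u, v automorphisms of X. Then in the automorphism group of (X ⊔ X) ⊔ X one has the identity (⁅u,v⁆ ⊔ 𝟙_X) ⊔ 𝟙_X = ⁅(u ⊔ u⁻¹) ⊔ 𝟙_X, (v ⊔ 𝟙_X) ⊔ v⁻¹⁆, where ⁅a,b⁆ denotes the group commutator. (This is the identity [u,v] + id_{T_{2r}} = [u + u⁻¹ + id, v + id + v⁻¹] used in the proof that the commutator subgroup of the stable automorphism group is perfect.) -/

import Mathlib

open CategoryTheory CategoryTheory.Limits
open scoped commutatorElement

universe u v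

variable {C : Type u} [Category.{v} C]

/-- The coproduct `u ⊔ v` of two automorphisms, as an automorphism of the
coproduct: applied to automorphisms, `coprod.map` defines the map
`Aut X × Aut Y → Aut (X ⊔ Y)`. -/
noncomputable def coprodAut [HasBinaryCoproducts C] {X Y : C}
    (u : Aut X) (v : Aut Y) : Aut (X ⨿ Y) :=
  coprod.mapIso u v

lemma coprodAut_mul [HasBinaryCoproducts C] {X Y : C} (a c : Aut X) (b d : Aut Y) :
    coprodAut a b * coprodAut c d = coprodAut (a * c) (b * d) := by
  rw [Aut.Aut_mul_def]
  ext
  all_goals (simp [coprodAut, Aut.Aut_mul_def, coprod.mapIso]; erw [Iso.trans_hom, Category.assoc])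

lemma coprodAut_one [HasBinaryCoproducts C] {X Y : C} :
    coprodAut (1 : Aut X) (1 : Aut Y) = 1 := by
  ext
  all_goals simp [coprodAut, show (1 : Aut X) = Iso.refl X from rfl,
    show (1 : Aut Y) = Iso.refl Y from rfl, show (1 : Aut (X ⨿ Y)) = Iso.refl _ from rfl]

lemma coprodAut_inv [HasBinaryCoproducts C] {X Y : C} (a : Aut X) (b : Aut Y) :
    (coprodAut a b)⁻¹ = coprodAut a⁻¹ b⁻¹ := by
  rw [inv_eq_iff_mul_eq_one, coprodAut_mul]
  simp [coprodAut_one]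

/-- In the automorphism group of `(X ⊔ X) ⊔ X` one has the identity
`(⁅u,v⁆ ⊔ 𝟙_X) ⊔ 𝟙_X = ⁅(u ⊔ u⁻¹) ⊔ 𝟙_X, (v ⊔ 𝟙_X) ⊔ v⁻¹⁆`. -/
theorem coprod_commutator_identity [HasBinaryCoproducts C] (X : C) (u v : Aut X) :
    coprodAut (coprodAut ⁅u, v⁆ (1 : Aut X)) (1 : Aut X) =
      ⁅coprodAut (coprodAut u u⁻¹) (1 : Aut X),
        coprodAut (coprodAut v (1 : Aut X)) v⁻¹⁆ := by
  simp only [commutatorElement_def, coprodAut_inv, coprodAut_mul]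
  congr 1 <;> [skip; group] <;> congr 1 <;> group
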